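/- The set {1,2}-reduced matrices in GL₃(𝔽_q): for a lower unitriangular matrix E with below-diagonal entries (α, β, γ) (positions (2,1), (3,1), (3,2)), the number τ_{α,β,γ} of permutations σ ∈ S₃ such that the column-permuted matrix Eσ is {1,2}-reduced equals: 1 if αγ ≠ 0; 2 if exactly one of α, γ is zero and β ≠ 0; 3 if exactly one of α, β, γ is nonzero; 6 if α = β = γ = 0. -/

import Mathlib

/-- `A` is an `I`-reduced matrix: invertible, the leftmost invertible (nonzero) entry of
each row is `1` (the "leading 1", at column `lead i`), entries above a leading `1` vanish,
and within each block of rows determined by `I` the leading `1`s occur in strictly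
increasing column positions (vacuous for `n = 3`, `I = {1,2}`). -/
def IsIReduced {R : Type*} [CommRing R] (n : ℕ) (I : Finset ℕ)
    (A : Matrix (Fin n) (Fin n) R) : Prop :=
  IsUnit A.det ∧
  ∃ lead : Fin n → Fin n,
    (∀ i, A i (lead i) = 1) ∧
    (∀ i j, j < lead i → ¬ IsUnit (A i j)) ∧
    (∀ i i' : Fin n, i' < i → A i' (lead i) = 0) ∧
    (∀ i i' : Fin n, i < i' → (∀ ι ∈ I, ((i : ℕ) < ι ↔ (i' : ℕ) < ι)) →
      lead i < lead i')

lemma key (F : Type*) [Field F] [DecidableEq F] (α β γ : F) (σ : Equiv.Perm (Fin 3)) :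
    IsIReduced 3 ({1, 2} : Finset ℕ)
        ((!![1, 0, 0; α, 1, 0; β, γ, 1]).submatrix id σ) ↔
      (α ≠ 0 → σ⁻¹ 1 < σ⁻¹ 0) ∧ (β ≠ 0 → σ⁻¹ 2 < σ⁻¹ 0) ∧ (γ ≠ 0 → σ⁻¹ 2 < σ⁻¹ 1) := by
  set M : Matrix (Fin 3) (Fin 3) F := !![1, 0, 0; α, 1, 0; β, γ, 1] with hM
  have fin3 : ∀ k : Fin 3, k = 0 ∨ k = 1 ∨ k = 2 := by decide
  have M00 : M 0 0 = 1 := by simp [hM]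
  have M01 : M 0 1 = 0 := by simp [hM]
  have M02 : M 0 2 = 0 := by simp [hM]
  have M10 : M 1 0 = α := by simp [hM]
  have M11 : M 1 1 = 1 := by simp [hM]
  have M12 : M 1 2 = 0 := by simp [hM]
  have M20 : M 2 0 = β := by simp [hM]
  have M21 : M 2 1 = γ := by simp [hM]
  have M22 : M 2 2 = 1 := by simp [hM]
  constructor
  · rintro ⟨-, lead, h1, h2, h3, -⟩
    simp only [Matrix.submatrix_apply, id_eq] at h1 h2 h3
    have l0 : lead 0 = σ⁻¹ 0 := by
      have := h1 0
      rcases fin3 (σ (lead 0)) with h | h | h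
      · rw [Equiv.Perm.eq_inv_iff_eq]; exact h
      · rw [h, M01] at this; exact absurd this (by simp)
      · rw [h, M02] at this; exact absurd this (by simp)
    have l1 : lead 1 = σ⁻¹ 1 := by
      have e1 := h1 1
      have e0 := h3 1 0 (by decide)
      rcases fin3 (σ (lead 1)) with h | h | h
      · rw [h, M00] at e0; exact absurd e0 one_ne_zero
      · rw [Equiv.Perm.eq_inv_iff_eq]; exact h
      · rw [h, M12] at e1; exact absurd e1 (by simp)
    have l2 : lead 2 = σ⁻¹ 2 := by
      have e0 := h3 2 0 (by decide)
      have e1 := h3 2 1 (by decide)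
      rcases fin3 (σ (lead 2)) with h | h | h
      · rw [h, M00] at e0; exact absurd e0 one_ne_zero
      · rw [h, M11] at e1; exact absurd e1 one_ne_zero
      · rw [Equiv.Perm.eq_inv_iff_eq]; exact h
    have tri : ∀ a b : Fin 3, a ≠ b → σ⁻¹ a < σ⁻¹ b ∨ σ⁻¹ b < σ⁻¹ a := by
      intro a b hab
      rcases lt_trichotomy (σ⁻¹ a) (σ⁻¹ b) with h | h | h
      · exact Or.inl h
      · exact absurd (σ⁻¹.injective h) hab
      · exact Or.inr h
    refine ⟨?_, ?_, ?_⟩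
    · intro hα
      rcases tri 1 0 (by decide) with h | h
      · exact h
      · have := h2 1 (σ⁻¹ 0) (l1 ▸ h)
        rw [Equiv.Perm.inv_def, Equiv.apply_symm_apply, M10, isUnit_iff_ne_zero, not_not] at this
        exact absurd this hα
    · intro hβ
      rcases tri 2 0 (by decide) with h | h
      · exact h
      · have := h2 2 (σ⁻¹ 0) (l2 ▸ h)
        rw [Equiv.Perm.inv_def, Equiv.apply_symm_apply, M20, isUnit_iff_ne_zero, not_not] at this
        exact absurd this hβ
    · intro hγ
      rcases tri 2 1 (by decide) with h | h
      · exact h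
      · have := h2 2 (σ⁻¹ 1) (l2 ▸ h)
        rw [Equiv.Perm.inv_def, Equiv.apply_symm_apply, M21, isUnit_iff_ne_zero, not_not] at this
        exact absurd this hγ
  · rintro ⟨ha, hb, hc⟩
    refine ⟨?_, ⇑σ⁻¹, ?_, ?_, ?_, ?_⟩
    · rw [Matrix.det_permute']
      have : M.det = 1 := by simp [hM, Matrix.det_fin_three]
      rw [this, mul_one]
      rcases Int.units_eq_one_or (Equiv.Perm.sign σ) with h | h <;> rw [h] <;> simp
    · intro i
      simp only [Matrix.submatrix_apply, id_eq, Equiv.Perm.inv_def, Equiv.apply_symm_apply]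
      rcases fin3 i with h | h | h <;> subst h <;> assumption
    · intro i j hj
      simp only [Matrix.submatrix_apply, id_eq, isUnit_iff_ne_zero, not_not]
      have hne : ∀ k : Fin 3, j < σ⁻¹ k → σ j ≠ k := by
        intro k hk he
        rw [← he, Equiv.Perm.inv_def, Equiv.symm_apply_apply] at hk
        exact lt_irrefl _ hk
      rcases fin3 i with h | h | h <;> subst h
      · rcases fin3 (σ j) with h | h | h
        · exact absurd h (hne 0 hj)
        · rw [h, M01]
        · rw [h, M02]
      · rcases fin3 (σ j) with h | h | h
        · rw [h, M10]
          by_contra hα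
          have h0 : j = σ⁻¹ 0 := by rw [Equiv.Perm.eq_inv_iff_eq]; exact h
          rw [h0] at hj
          exact absurd (ha hα) (lt_asymm hj)
        · exact absurd h (hne 1 hj)
        · rw [h, M12]
      · rcases fin3 (σ j) with h | h | h
        · rw [h, M20]
          by_contra hβ
          have h0 : j = σ⁻¹ 0 := by rw [Equiv.Perm.eq_inv_iff_eq]; exact h
          rw [h0] at hj
          exact absurd (hb hβ) (lt_asymm hj)
        · rw [h, M21]
          by_contra hγ
          have h0 : j = σ⁻¹ 1 := by rw [Equiv.Perm.eq_inv_iff_eq]; exact h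
          rw [h0] at hj
          exact absurd (hc hγ) (lt_asymm hj)
        · exact absurd h (hne 2 hj)
    · intro i i' hlt
      simp only [Matrix.submatrix_apply, id_eq, Equiv.Perm.inv_def, Equiv.apply_symm_apply]
      rcases fin3 i with h | h | h <;> subst h <;> rcases fin3 i' with h | h | h <;> subst h <;>
        first
          | exact absurd hlt (by decide)
          | assumption
    · intro i i' hlt h
      exfalso
      have hmem : (i' : ℕ) ∈ ({1, 2} : Finset ℕ) := by
        have := i'.isLt
        have h1 : (i : ℕ) < (i' : ℕ) := hlt
        simp only [Finset.mem_insert, Finset.mem_singleton]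
        omega
      exact lt_irrefl _ ((h _ hmem).mp hlt)

/-- For the lower unitriangular matrix `E = [[1,0,0],[α,1,0],[β,γ,1]]`, the number of
permutations `σ ∈ S₃` such that the column-permuted matrix `Eσ` is `{1,2}`-reduced equals:
`1` if `αγ ≠ 0`; `2` if exactly one of `α, γ` is zero and `β ≠ 0`; `3` if exactly one of
`α, β, γ` is nonzero; `6` if `α = β = γ = 0`. -/
theorem stmt_16 (F : Type*) [Field F] [DecidableEq F] (α β γ : F) :
    Nat.card {σ : Equiv.Perm (Fin 3) //
        IsIReduced 3 ({1, 2} : Finset ℕ)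
          ((!![1, 0, 0; α, 1, 0; β, γ, 1]).submatrix id σ)}
      = if α ≠ 0 ∧ γ ≠ 0 then 1
        else if ((α = 0 ∧ γ ≠ 0) ∨ (α ≠ 0 ∧ γ = 0)) ∧ β ≠ 0 then 2
        else if (α ≠ 0 ∧ β = 0 ∧ γ = 0) ∨ (α = 0 ∧ β ≠ 0 ∧ γ = 0) ∨
                (α = 0 ∧ β = 0 ∧ γ ≠ 0) then 3
        else 6 := by
  rw [Nat.card_congr (Equiv.subtypeEquivRight (fun σ => key F α β γ σ))]
  rcases eq_or_ne α 0 with hα | hα <;> rcases eq_or_ne β 0 with hβ | hβ <;>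
      rcases eq_or_ne γ 0 with hγ | hγ <;>
    simp only [hα, hβ, hγ, ne_eq, not_true_eq_false, not_false_eq_true, false_implies,
      true_implies, true_and, and_true, and_false, false_and, and_self, if_true, if_false,
      or_self, or_true, true_or, false_or, or_false, if_pos, if_neg, not_false_iff] <;>
    rw [Nat.card_eq_fintype_card] <;> decide
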